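/- Let n ≥ 1 and let f_1,…,f_n : ℝ^d → ℝ be differentiable, with f_i being μ_i-strongly convex for some μ_i > 0. Let x⋆ be the unique minimizer of f := (1/n)Σ_{i=1}^n f_i. Let 𝒮 be a proper, nonvacuous sampling over the subsets of [n], define A_𝒮 := E_{S∼𝒮}[(1/|S|)Σ_{i∈S} 1/(1 + γμ_i)] and B_𝒮 := E_{S∼𝒮}[(1/|S|)Σ_{i∈S} (γ/((1 + γμ_i)μ_i))‖∇f_i(x⋆)‖²]. Let x_0 ∈ ℝ^d be deterministic, let (S_t)_{t≥0} be independent random sets each distributed according to 𝒮, and define the proximal-averaging iterates x_{t+1} := (1/|S_t|)Σ_{i∈S_t} prox_{γ f_i}(x_t). Then for every t ≥ 0 and every γ > 0, E[‖x_t − x⋆‖²] ≤ A_𝒮^t·‖x_0 − x⋆‖² + B_𝒮/(1 − A_𝒮). -/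

import Mathlib

open RealInnerProductSpace


variable {F : Type*} [NormedAddCommGroup F] [InnerProductSpace ℝ F]

/-- A minimizer of a strongly convex (gradient-form) function enjoys a quadratic growth bound. -/
lemma aux_strong_min (h : F → ℝ) (G : F → F) (c : ℝ) (hc : 0 < c)
    (hsc : ∀ u w, h u + ⟪G u, w - u⟫ + c / 2 * ‖w - u‖ ^ 2 ≤ h w)
    (z : F) (hz : ∀ w, h z ≤ h w) (w : F) : h z + c / 2 * ‖w - z‖ ^ 2 ≤ h w := by
  have key : ∀ l : ℝ, 0 < l → l ≤ 1 → (1 - l) * (c / 2 * ‖w - z‖ ^ 2) ≤ h w - h z := by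
    intro l hl hl1
    set u := z + l • (w - z) with hu
    have h1 := hsc u z
    have h2 := hsc u w
    have hzu : z - u = (-l) • (w - z) := by rw [hu]; module
    have hwu : w - u = (1 - l) • (w - z) := by rw [hu]; module
    rw [hzu] at h1
    rw [hwu] at h2
    rw [real_inner_smul_right, norm_smul, mul_pow, Real.norm_eq_abs, sq_abs] at h1 h2
    have hu2 := hz u
    have hmul : l * ((1 - l) * (c / 2 * ‖w - z‖ ^ 2)) ≤ l * (h w - h z) := by
      nlinarith [mul_le_mul_of_nonneg_left h1 (by linarith : (0:ℝ) ≤ 1 - l),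
        mul_le_mul_of_nonneg_left h2 hl.le]
    exact le_of_mul_le_mul_left hmul hl
  rcases le_or_gt (c / 2 * ‖w - z‖ ^ 2) 0 with hK | hK
  · linarith [hz w]
  · have : ∀ ε > 0, h z + c / 2 * ‖w - z‖ ^ 2 ≤ h w + ε := by
      intro ε hε
      set K := c / 2 * ‖w - z‖ ^ 2 with hKdef
      set l := min 1 (ε / K) with hldef
      have hl0 : 0 < l := lt_min one_pos (div_pos hε hK)
      have hl1 : l ≤ 1 := min_le_left _ _
      have hlK : l * K ≤ ε := by
        calc l * K ≤ (ε / K) * K := by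
              apply mul_le_mul_of_nonneg_right (min_le_right _ _) hK.le
          _ = ε := by field_simp
      have := key l hl0 hl1
      nlinarith
    exact le_of_forall_pos_le_add this

/-- One-step proximal contraction for a strongly convex function. -/
lemma aux_contract (φ : F → ℝ) (g : F → F) (μ γ : ℝ) (hμ : 0 < μ) (hγ : 0 < γ)
    (hsc : ∀ y z, φ y + ⟪g y, z - y⟫ + μ / 2 * ‖z - y‖ ^ 2 ≤ φ z)
    (xs x z : F)
    (hz : ∀ w, φ z + 1 / (2 * γ) * ‖z - x‖ ^ 2 ≤ φ w + 1 / (2 * γ) * ‖w - x‖ ^ 2) :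
    ‖z - xs‖ ^ 2 ≤ (1 + γ * μ)⁻¹ * ‖x - xs‖ ^ 2
      + γ / ((1 + γ * μ) * μ) * ‖g xs‖ ^ 2 := by
  set h : F → ℝ := fun w => φ w + 1 / (2 * γ) * ‖w - x‖ ^ 2 with hh
  have hsch : ∀ u w, h u + ⟪g u + γ⁻¹ • (u - x), w - u⟫ + (μ + 1/γ) / 2 * ‖w - u‖ ^ 2 ≤ h w := by
    intro u w
    have hq : 1 / (2 * γ) * ‖w - x‖ ^ 2
        = 1 / (2 * γ) * ‖u - x‖ ^ 2 + γ⁻¹ * ⟪u - x, w - u⟫ + 1 / (2 * γ) * ‖w - u‖ ^ 2 := by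
      have hwx : w - x = (u - x) + (w - u) := by abel
      rw [hwx, norm_add_sq_real]
      field_simp
    have h1 := hsc u w
    rw [inner_add_left, real_inner_smul_left]
    simp only [hh]
    rw [hq]
    have h1γ : (μ + 1/γ) / 2 * ‖w - u‖ ^ 2 = μ / 2 * ‖w - u‖ ^ 2 + 1 / (2*γ) * ‖w - u‖ ^ 2 := by
      field_simp
    linarith
  have key := aux_strong_min h (fun u => g u + γ⁻¹ • (u - x)) (μ + 1/γ)
    (by positivity) hsch z hz xs
  simp only [hh] at key
  -- key : φ z + 1/(2γ)‖z-x‖² + (μ+1/γ)/2 * ‖xs - z‖² ≤ φ xs + 1/(2γ)‖xs-x‖²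
  have h2 := hsc xs z
  have h3 : -(1 / (2*μ) * ‖g xs‖ ^ 2 + μ / 2 * ‖z - xs‖ ^ 2) ≤ ⟪g xs, z - xs⟫ := by
    have cs : |⟪g xs, z - xs⟫| ≤ ‖g xs‖ * ‖z - xs‖ := abs_real_inner_le_norm _ _
    have h4 : ‖g xs‖ * ‖z - xs‖ ≤ 1 / (2*μ) * ‖g xs‖ ^ 2 + μ / 2 * ‖z - xs‖ ^ 2 := by
      have h4a : 2 * μ * (‖g xs‖ * ‖z - xs‖) ≤ ‖g xs‖ ^ 2 + μ ^ 2 * ‖z - xs‖ ^ 2 := by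
        nlinarith [sq_nonneg (‖g xs‖ - μ * ‖z - xs‖)]
      calc ‖g xs‖ * ‖z - xs‖ = (2*μ)⁻¹ * (2 * μ * (‖g xs‖ * ‖z - xs‖)) := by
            field_simp
        _ ≤ (2*μ)⁻¹ * (‖g xs‖ ^ 2 + μ ^ 2 * ‖z - xs‖ ^ 2) :=
            mul_le_mul_of_nonneg_left h4a (by positivity)
        _ = 1 / (2*μ) * ‖g xs‖ ^ 2 + μ / 2 * ‖z - xs‖ ^ 2 := by
            field_simp
    nlinarith [neg_abs_le ⟪g xs, z - xs⟫]
  have hrev1 : ‖xs - z‖ = ‖z - xs‖ := norm_sub_rev _ _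
  have hrev2 : ‖xs - x‖ = ‖x - xs‖ := norm_sub_rev _ _
  rw [hrev1, hrev2] at key
  have H4 : (μ / 2 + 1 / (2*γ)) * ‖z - xs‖ ^ 2
      ≤ 1 / (2*γ) * ‖x - xs‖ ^ 2 + 1 / (2*μ) * ‖g xs‖ ^ 2 := by
    have hq0 : (0:ℝ) ≤ 1 / (2 * γ) * ‖z - x‖ ^ 2 := by positivity
    have he : (μ + 1/γ) / 2 * ‖z - xs‖ ^ 2
        = (μ / 2 + 1 / (2*γ)) * ‖z - xs‖ ^ 2 - μ / 2 * ‖z - xs‖ ^ 2 + μ / 2 * ‖z - xs‖ ^ 2 := by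
      field_simp; ring
    linarith
  have hP : (0:ℝ) < 1 + γ * μ := by positivity
  have H5 : (1 + γ * μ) * ‖z - xs‖ ^ 2 ≤ ‖x - xs‖ ^ 2 + γ / μ * ‖g xs‖ ^ 2 := by
    have e1 : (1 + γ * μ) = (2 * γ) * (μ / 2 + 1 / (2*γ)) := by field_simp; ring
    have e2 : ‖x - xs‖ ^ 2 + γ / μ * ‖g xs‖ ^ 2
        = (2 * γ) * (1 / (2*γ) * ‖x - xs‖ ^ 2 + 1 / (2*μ) * ‖g xs‖ ^ 2) := by
      field_simp
    rw [e1, e2, mul_assoc]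
    exact mul_le_mul_of_nonneg_left H4 (by positivity)
  calc ‖z - xs‖ ^ 2 = (1 + γ * μ)⁻¹ * ((1 + γ * μ) * ‖z - xs‖ ^ 2) := by
        field_simp
    _ ≤ (1 + γ * μ)⁻¹ * (‖x - xs‖ ^ 2 + γ / μ * ‖g xs‖ ^ 2) :=
        mul_le_mul_of_nonneg_left H5 (by positivity)
    _ = (1 + γ * μ)⁻¹ * ‖x - xs‖ ^ 2 + γ / ((1 + γ * μ) * μ) * ‖g xs‖ ^ 2 := by
        field_simp

/-- Jensen's inequality for the squared norm and a uniform average. -/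
lemma aux_jensen {ι : Type*} (S : Finset ι) (hS : S.Nonempty) (y : ι → F) (c : F) :
    ‖(S.card : ℝ)⁻¹ • ∑ i ∈ S, y i - c‖ ^ 2 ≤ (S.card : ℝ)⁻¹ * ∑ i ∈ S, ‖y i - c‖ ^ 2 := by
  have hm : (0:ℝ) < S.card := by exact_mod_cast hS.card_pos
  have h1 : (S.card : ℝ)⁻¹ • ∑ i ∈ S, y i - c = (S.card : ℝ)⁻¹ • ∑ i ∈ S, (y i - c) := by
    rw [Finset.sum_sub_distrib, smul_sub, Finset.sum_const, ← Nat.cast_smul_eq_nsmul ℝ,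
      smul_smul, inv_mul_cancel₀ hm.ne', one_smul]
  rw [h1, norm_smul, mul_pow, Real.norm_eq_abs, sq_abs]
  have h2 : ‖∑ i ∈ S, (y i - c)‖ ^ 2 ≤ (∑ i ∈ S, ‖y i - c‖) ^ 2 := by
    have := norm_sum_le S (fun i => y i - c)
    nlinarith [norm_nonneg (∑ i ∈ S, (y i - c))]
  have h3 : (∑ i ∈ S, ‖y i - c‖) ^ 2 ≤ (S.card : ℝ) * ∑ i ∈ S, ‖y i - c‖ ^ 2 :=
    sq_sum_le_card_mul_sum_sq
  calc ((S.card:ℝ)⁻¹) ^ 2 * ‖∑ i ∈ S, (y i - c)‖ ^ 2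
      ≤ ((S.card:ℝ)⁻¹) ^ 2 * ((S.card : ℝ) * ∑ i ∈ S, ‖y i - c‖ ^ 2) := by
        apply mul_le_mul_of_nonneg_left (le_trans h2 h3) (by positivity)
    _ = (S.card : ℝ)⁻¹ * ∑ i ∈ S, ‖y i - c‖ ^ 2 := by
        field_simp
/-- Convergence of FedProx-SPPM-AS (proximal averaging, one local iteration): with i.i.d.
sampled cohorts `S_t ~ 𝒮` (encoded by summing over all finite histories with their product
probabilities) and iterates `x_{t+1} = (1/|S_t|)∑_{i∈S_t} prox_{γ f_i}(x_t)`, one has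
`E‖x_t - x⋆‖² ≤ A_𝒮^t ‖x_0 - x⋆‖² + B_𝒮/(1 - A_𝒮)`. -/
theorem fedprox_sppm_as_convergence
    {n d : ℕ} (hn : 1 ≤ n)
    (f : Fin n → EuclideanSpace ℝ (Fin d) → ℝ)
    (f' : Fin n → EuclideanSpace ℝ (Fin d) → EuclideanSpace ℝ (Fin d))
    (hdiff : ∀ i y, HasGradientAt (f i) (f' i y) y)
    (μs : Fin n → ℝ) (hμpos : ∀ i, 0 < μs i)
    (hsc : ∀ (i : Fin n) (y z : EuclideanSpace ℝ (Fin d)),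
      f i y + ⟪f' i y, z - y⟫ + μs i / 2 * ‖z - y‖ ^ 2 ≤ f i z)
    (xstar : EuclideanSpace ℝ (Fin d))
    (hmin : ∀ y, (n : ℝ)⁻¹ * ∑ i, f i xstar ≤ (n : ℝ)⁻¹ * ∑ i, f i y)
    -- the sampling distribution 𝒮, nonvacuous and proper
    (p : Finset (Fin n) → ℝ) (hp0 : ∀ S, 0 ≤ p S)
    (hp1 : ∑ S : Finset (Fin n), p S = 1) (hvac : p ∅ = 0)
    (pc : Fin n → ℝ)
    (hpc : ∀ i, pc i = ∑ S ∈ Finset.univ.filter (fun S : Finset (Fin n) => i ∈ S), p S)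
    (hproper : ∀ i, 0 < pc i)
    -- the stepsize and the proximity operators of the γ f_i
    (γ : ℝ) (hγ : 0 < γ)
    (prox : Fin n → EuclideanSpace ℝ (Fin d) → EuclideanSpace ℝ (Fin d))
    (hprox : ∀ (i : Fin n) (x z : EuclideanSpace ℝ (Fin d)),
      f i (prox i x) + (1 / (2 * γ)) * ‖prox i x - x‖ ^ 2 ≤
        f i z + (1 / (2 * γ)) * ‖z - x‖ ^ 2)
    -- the constants A_𝒮 and B_𝒮
    (A B : ℝ)
    (hA : A = ∑ S : Finset (Fin n), p S * (((S.card : ℝ))⁻¹ * ∑ i ∈ S, (1 + γ * μs i)⁻¹))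
    (hB : B = ∑ S : Finset (Fin n), p S * (((S.card : ℝ))⁻¹ *
      ∑ i ∈ S, γ / ((1 + γ * μs i) * μs i) * ‖f' i xstar‖ ^ 2))
    -- the iterates, as a function of the history of sampled cohorts
    (x0 : EuclideanSpace ℝ (Fin d))
    (X : (t : ℕ) → (Fin t → Finset (Fin n)) → EuclideanSpace ℝ (Fin d))
    (hX0 : ∀ σ, X 0 σ = x0)
    (hXrec : ∀ (t : ℕ) (σ : Fin (t + 1) → Finset (Fin n)),
      X (t + 1) σ = ((σ (Fin.last t)).card : ℝ)⁻¹ •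
        ∑ i ∈ σ (Fin.last t), prox i (X t (fun j => σ j.castSucc))) :
    ∀ t : ℕ,
      (∑ σ : Fin t → Finset (Fin n), (∏ j, p (σ j)) * ‖X t σ - xstar‖ ^ 2) ≤
        A ^ t * ‖x0 - xstar‖ ^ 2 + B / (1 - A) := by
  -- basic facts about A and B
  have hA0 : 0 ≤ A := by
    rw [hA]
    apply Finset.sum_nonneg
    intro S _
    apply mul_nonneg (hp0 S)
    apply mul_nonneg (by positivity)
    apply Finset.sum_nonneg
    intro i _
    have := hμpos i
    positivity
  have hB0 : 0 ≤ B := by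
    rw [hB]
    apply Finset.sum_nonneg
    intro S _
    apply mul_nonneg (hp0 S)
    apply mul_nonneg (by positivity)
    apply Finset.sum_nonneg
    intro i _
    have := hμpos i
    positivity
  -- A < 1, via the minimum of the strong convexity constants
  haveI : NeZero n := ⟨by omega⟩
  have huniv : (Finset.univ : Finset (Fin n)).Nonempty := ⟨⟨0, by omega⟩, Finset.mem_univ _⟩
  set μm : ℝ := Finset.univ.inf' huniv μs with hμm
  have hμm0 : 0 < μm := by
    rw [hμm, Finset.lt_inf'_iff]
    exact fun i _ => hμpos i
  set θ : ℝ := (1 + γ * μm)⁻¹ with hθ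
  have hθ0 : 0 < θ := by positivity
  have hθ1 : θ < 1 := by
    rw [hθ]
    apply inv_lt_one_of_one_lt₀
    nlinarith
  have hA1 : A < 1 := by
    have hAθ : A ≤ θ := by
      rw [hA]
      calc ∑ S : Finset (Fin n), p S * ((S.card : ℝ)⁻¹ * ∑ i ∈ S, (1 + γ * μs i)⁻¹)
          ≤ ∑ S : Finset (Fin n), p S * θ := by
            apply Finset.sum_le_sum
            intro S _
            apply mul_le_mul_of_nonneg_left _ (hp0 S)
            rcases S.eq_empty_or_nonempty with rfl | hS
            · simpa using hθ0.le
            · have hcard : (0:ℝ) < S.card := by exact_mod_cast hS.card_pos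
              have hsum : ∑ i ∈ S, (1 + γ * μs i)⁻¹ ≤ (S.card : ℝ) * θ := by
                calc ∑ i ∈ S, (1 + γ * μs i)⁻¹ ≤ ∑ _i ∈ S, θ := by
                      apply Finset.sum_le_sum
                      intro i _
                      rw [hθ]
                      have hle : μm ≤ μs i := Finset.inf'_le _ (Finset.mem_univ i)
                      apply inv_anti₀ (by positivity)
                      nlinarith
                  _ = (S.card : ℝ) * θ := by rw [Finset.sum_const, nsmul_eq_mul]
              calc (S.card : ℝ)⁻¹ * ∑ i ∈ S, (1 + γ * μs i)⁻¹
                  ≤ (S.card : ℝ)⁻¹ * ((S.card : ℝ) * θ) :=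
                    mul_le_mul_of_nonneg_left hsum (by positivity)
                _ = θ := by field_simp
        _ = θ := by rw [← Finset.sum_mul, hp1, one_mul]
    linarith
  have h1A : 0 < 1 - A := by linarith
  -- splitting a sum over histories of length t+1
  have hsplit : ∀ (t : ℕ) (Φ : (Fin (t + 1) → Finset (Fin n)) → ℝ),
      ∑ σ : Fin (t + 1) → Finset (Fin n), Φ σ
        = ∑ σ' : Fin t → Finset (Fin n), ∑ S : Finset (Fin n), Φ (Fin.snoc σ' S) := by
    intro t Φ
    rw [← (Fin.snocEquiv (fun _ => Finset (Fin n))).sum_comp Φ, Fintype.sum_prod_type,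
      Finset.sum_comm]
    rfl
  have hprod : ∀ (t : ℕ) (σ' : Fin t → Finset (Fin n)) (S : Finset (Fin n)),
      (∏ j : Fin (t + 1), p ((Fin.snoc σ' S : Fin (t+1) → Finset (Fin n)) j))
        = (∏ j : Fin t, p (σ' j)) * p S := by
    intro t σ' S
    rw [Fin.prod_univ_castSucc]
    simp [Fin.snoc_castSucc, Fin.snoc_last]
  -- total mass of histories is one
  have hmass : ∀ t : ℕ, ∑ σ : Fin t → Finset (Fin n), (∏ j, p (σ j)) = 1 := by
    intro t
    induction t with
    | zero => simp
    | succ t ih =>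
        rw [hsplit t (fun σ => ∏ j, p (σ j))]
        calc ∑ σ' : Fin t → Finset (Fin n), ∑ S : Finset (Fin n),
              (∏ j : Fin (t + 1), p ((Fin.snoc σ' S : Fin (t+1) → Finset (Fin n)) j))
            = ∑ σ' : Fin t → Finset (Fin n), ∑ S : Finset (Fin n),
              (∏ j : Fin t, p (σ' j)) * p S := by
              apply Finset.sum_congr rfl
              intro σ' _
              exact Finset.sum_congr rfl fun S _ => hprod t σ' S
          _ = 1 := by
              simp only [← Finset.mul_sum, hp1, mul_one, ih]
  -- the one-step expected contraction
  have step : ∀ y : EuclideanSpace ℝ (Fin d),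
      ∑ S : Finset (Fin n), p S * ‖((S.card : ℝ)⁻¹ • ∑ i ∈ S, prox i y) - xstar‖ ^ 2
        ≤ A * ‖y - xstar‖ ^ 2 + B := by
    intro y
    rw [hA, hB, Finset.sum_mul, ← Finset.sum_add_distrib]
    apply Finset.sum_le_sum
    intro S _
    rcases S.eq_empty_or_nonempty with rfl | hS
    · simp [hvac]
    · have contr : ∀ i ∈ S, ‖prox i y - xstar‖ ^ 2
          ≤ (1 + γ * μs i)⁻¹ * ‖y - xstar‖ ^ 2
            + γ / ((1 + γ * μs i) * μs i) * ‖f' i xstar‖ ^ 2 := by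
        intro i _
        exact aux_contract (f i) (f' i) (μs i) γ (hμpos i) hγ (hsc i) xstar y
          (prox i y) (fun w => hprox i y w)
      have jensen := aux_jensen S hS (fun i => prox i y) xstar
      calc p S * ‖((S.card : ℝ)⁻¹ • ∑ i ∈ S, prox i y) - xstar‖ ^ 2
          ≤ p S * ((S.card : ℝ)⁻¹ * ∑ i ∈ S, ‖prox i y - xstar‖ ^ 2) :=
            mul_le_mul_of_nonneg_left jensen (hp0 S)
        _ ≤ p S * ((S.card : ℝ)⁻¹ * ∑ i ∈ S, ((1 + γ * μs i)⁻¹ * ‖y - xstar‖ ^ 2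
              + γ / ((1 + γ * μs i) * μs i) * ‖f' i xstar‖ ^ 2)) := by
            apply mul_le_mul_of_nonneg_left _ (hp0 S)
            apply mul_le_mul_of_nonneg_left _ (by positivity)
            exact Finset.sum_le_sum contr
        _ = p S * ((S.card : ℝ)⁻¹ * ∑ i ∈ S, (1 + γ * μs i)⁻¹) * ‖y - xstar‖ ^ 2
              + p S * ((S.card : ℝ)⁻¹ *
                ∑ i ∈ S, γ / ((1 + γ * μs i) * μs i) * ‖f' i xstar‖ ^ 2) := by
            rw [Finset.sum_add_distrib, ← Finset.sum_mul]
            ring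
  -- main induction
  intro t
  induction t with
  | zero =>
      have hBA : 0 ≤ B / (1 - A) := div_nonneg hB0 h1A.le
      simp only [pow_zero, one_mul]
      have : ∑ σ : Fin 0 → Finset (Fin n), (∏ j, p (σ j)) * ‖X 0 σ - xstar‖ ^ 2
          = ‖x0 - xstar‖ ^ 2 := by
        simp [hX0]
      rw [this]
      linarith
  | succ t ih =>
      have hrec : ∑ σ : Fin (t + 1) → Finset (Fin n), (∏ j, p (σ j)) * ‖X (t + 1) σ - xstar‖ ^ 2
          ≤ A * (∑ σ : Fin t → Finset (Fin n), (∏ j, p (σ j)) * ‖X t σ - xstar‖ ^ 2) + B := by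
        rw [hsplit t (fun σ => (∏ j, p (σ j)) * ‖X (t + 1) σ - xstar‖ ^ 2)]
        have inner_le : ∀ σ' : Fin t → Finset (Fin n),
            ∑ S : Finset (Fin n),
              (∏ j : Fin (t + 1), p ((Fin.snoc σ' S : Fin (t+1) → Finset (Fin n)) j)) * ‖X (t + 1) (Fin.snoc σ' S) - xstar‖ ^ 2
            ≤ (∏ j, p (σ' j)) * (A * ‖X t σ' - xstar‖ ^ 2 + B) := by
          intro σ'
          have hXval : ∀ S : Finset (Fin n), X (t + 1) (Fin.snoc σ' S)
              = (S.card : ℝ)⁻¹ • ∑ i ∈ S, prox i (X t σ') := by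
            intro S
            rw [hXrec t (Fin.snoc σ' S)]
            have h1 : (Fin.snoc σ' S : Fin (t+1) → Finset (Fin n)) (Fin.last t) = S :=
              Fin.snoc_last _ _
            have h2 : (fun j : Fin t => (Fin.snoc σ' S : Fin (t+1) → Finset (Fin n)) j.castSucc)
                = σ' := funext fun j => Fin.snoc_castSucc _ _ _
            rw [h1, h2]
          calc ∑ S : Finset (Fin n),
                (∏ j : Fin (t + 1), p ((Fin.snoc σ' S : Fin (t+1) → Finset (Fin n)) j)) * ‖X (t + 1) (Fin.snoc σ' S) - xstar‖ ^ 2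
              = (∏ j, p (σ' j)) * ∑ S : Finset (Fin n),
                  p S * ‖((S.card : ℝ)⁻¹ • ∑ i ∈ S, prox i (X t σ')) - xstar‖ ^ 2 := by
                rw [Finset.mul_sum]
                apply Finset.sum_congr rfl
                intro S _
                rw [hprod t σ' S, hXval S]
                ring
            _ ≤ (∏ j, p (σ' j)) * (A * ‖X t σ' - xstar‖ ^ 2 + B) := by
                apply mul_le_mul_of_nonneg_left (step (X t σ'))
                exact Finset.prod_nonneg fun j _ => hp0 _
        calc ∑ σ' : Fin t → Finset (Fin n), ∑ S : Finset (Fin n),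
              (∏ j : Fin (t + 1), p ((Fin.snoc σ' S : Fin (t+1) → Finset (Fin n)) j)) * ‖X (t + 1) (Fin.snoc σ' S) - xstar‖ ^ 2
            ≤ ∑ σ' : Fin t → Finset (Fin n),
              (∏ j, p (σ' j)) * (A * ‖X t σ' - xstar‖ ^ 2 + B) :=
              Finset.sum_le_sum fun σ' _ => inner_le σ'
          _ = A * (∑ σ' : Fin t → Finset (Fin n), (∏ j, p (σ' j)) * ‖X t σ' - xstar‖ ^ 2)
                + B * (∑ σ' : Fin t → Finset (Fin n), (∏ j, p (σ' j))) := by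
              rw [Finset.mul_sum, Finset.mul_sum, ← Finset.sum_add_distrib]
              apply Finset.sum_congr rfl
              intro σ' _
              ring
          _ = A * (∑ σ' : Fin t → Finset (Fin n), (∏ j, p (σ' j)) * ‖X t σ' - xstar‖ ^ 2) + B := by
              rw [hmass t, mul_one]
      have hfix : A * (B / (1 - A)) + B = B / (1 - A) := by
        field_simp
        ring
      calc ∑ σ : Fin (t + 1) → Finset (Fin n), (∏ j, p (σ j)) * ‖X (t + 1) σ - xstar‖ ^ 2
          ≤ A * (∑ σ : Fin t → Finset (Fin n), (∏ j, p (σ j)) * ‖X t σ - xstar‖ ^ 2) + B := hrec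
        _ ≤ A * (A ^ t * ‖x0 - xstar‖ ^ 2 + B / (1 - A)) + B :=
            add_le_add_left (mul_le_mul_of_nonneg_left ih hA0) B
        _ = A ^ (t + 1) * ‖x0 - xstar‖ ^ 2 + (A * (B / (1 - A)) + B) := by ring
        _ = A ^ (t + 1) * ‖x0 - xstar‖ ^ 2 + B / (1 - A) := by rw [hfix]
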